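/- Let N ≥ 2 and let ρ be a positive semidefinite N-qubit operator with Tr(ρ) = 1 and Tr(ρ·J_a) = 0 for each a ∈ {x, y, z}. Suppose there is a real α* > 1 such that the numbers u_a := α*·(Re Tr(ρ·J_a²) − N/4) + N/4, a ∈ {x,y,z}, satisfy the Tóth inequalities. Then for every real β with β ≥ 2^N/(α* − 1), the matrix σ = ((2^N + β)·ρ − 𝟙)/β satisfies Tr(σ) = 1, Tr(σ·J_a) = 0 for each a, and the numbers v_a := Re Tr(σ·J_a²) satisfy the Tóth inequalities. -/

import Mathlib

open scoped ComplexOrder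

noncomputable section

/-- Separability of an `N`-qubit matrix across the bipartition `X : Xᶜ`. -/
def SepAcross {N : ℕ} (X : Finset (Fin N))
    (σ : Matrix (Fin N → Fin 2) (Fin N → Fin 2) ℂ) : Prop :=
  ∃ (K : ℕ)
    (A : Fin K → Matrix ({i // i ∈ X} → Fin 2) ({i // i ∈ X} → Fin 2) ℂ)
    (B : Fin K → Matrix ({i // i ∈ Xᶜ} → Fin 2) ({i // i ∈ Xᶜ} → Fin 2) ℂ),
    (∀ k, (A k).PosSemidef) ∧ (∀ k, (B k).PosSemidef) ∧
    ∀ x y, σ x y =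
      ∑ k, A k (fun i => x i.1) (fun i => y i.1) * B k (fun i => x i.1) (fun i => y i.1)

/-- Partial transpose with respect to the qubits in `X`. -/
def pt {N : ℕ} (X : Finset (Fin N))
    (σ : Matrix (Fin N → Fin 2) (Fin N → Fin 2) ℂ) :
    Matrix (Fin N → Fin 2) (Fin N → Fin 2) ℂ :=
  fun x y => σ (fun i => if i ∈ X then y i else x i) (fun i => if i ∈ X then x i else y i)

/-- The Dicke state `|S_k^N⟩`. -/
def dicke (N k : ℕ) : (Fin N → Fin 2) → ℂ :=
  fun x => if (Finset.univ.filter (fun i => x i = 1)).card = k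
    then ((Real.sqrt (N.choose k))⁻¹ : ℝ) else 0

/-- The projector onto the symmetric subspace of `N` qubits. -/
def symProj (N : ℕ) : Matrix (Fin N → Fin 2) (Fin N → Fin 2) ℂ :=
  fun x y => ∑ k ∈ Finset.range (N + 1), dicke N k x * star (dicke N k y)

/-- Full separability of an `N`-qubit matrix. -/
def FullySep {N : ℕ} (σ : Matrix (Fin N → Fin 2) (Fin N → Fin 2) ℂ) : Prop :=
  ∃ (K : ℕ) (A : Fin K → Fin N → Matrix (Fin 2) (Fin 2) ℂ),
    (∀ k i, (A k i).PosSemidef) ∧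
    ∀ x y, σ x y = ∑ k, ∏ i, A k i (x i) (y i)

/-- The second Pauli matrix. -/
def pauliY : Matrix (Fin 2) (Fin 2) ℂ := !![0, -Complex.I; Complex.I, 0]

/-- The `N`-qubit operator acting as `σy` on each qubit in `X` and trivially elsewhere. -/
def pauliYat {N : ℕ} (X : Finset (Fin N)) :
    Matrix (Fin N → Fin 2) (Fin N → Fin 2) ℂ :=
  fun x y => ∏ i, if i ∈ X then pauliY (x i) (y i) else (if x i = y i then 1 else 0)

/-- `(σy@X) · ρ^{T_X} · (σy@X)`. -/
def tildeAt {N : ℕ} (X : Finset (Fin N))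
    (ρ : Matrix (Fin N → Fin 2) (Fin N → Fin 2) ℂ) :
    Matrix (Fin N → Fin 2) (Fin N → Fin 2) ℂ :=
  pauliYat X * pt X ρ * pauliYat X

/-- The Hankel matrix `M_l(q)` with entries `q_{i+j+l} / (N choose (i+j+l))`. -/
def hankel (N l : ℕ) (q : ℕ → ℝ) :
    Matrix (Fin ((N - l) / 2 + 1)) (Fin ((N - l) / 2 + 1)) ℝ :=
  fun i j => q ((i : ℕ) + j + l) / (N.choose ((i : ℕ) + j + l))

/-- The diagonal symmetric state `Σ_k p_k |S_k^N⟩⟨S_k^N|`. -/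
def rhoDS (N : ℕ) (p : ℕ → ℝ) : Matrix (Fin N → Fin 2) (Fin N → Fin 2) ℂ :=
  fun x y => ∑ k ∈ Finset.range (N + 1), (p k : ℂ) * dicke N k x * star (dicke N k y)

/-- The three Pauli matrices `σx, σy, σz`. -/
def pauli3 : Fin 3 → Matrix (Fin 2) (Fin 2) ℂ :=
  ![!![0, 1; 1, 0], !![0, -Complex.I; Complex.I, 0], !![1, 0; 0, -1]]

/-- The `N`-qubit operator acting as `A` on qubit `i` and trivially elsewhere. -/
def embedAt {N : ℕ} (A : Matrix (Fin 2) (Fin 2) ℂ) (i : Fin N) :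
    Matrix (Fin N → Fin 2) (Fin N → Fin 2) ℂ :=
  fun x y => A (x i) (y i) * ∏ j ∈ Finset.univ.erase i, (if x j = y j then (1 : ℂ) else 0)

/-- The collective spin component `J_a = (1/2) Σ_i σ_a^{(i)}`. -/
def Jspin (N : ℕ) (a : Fin 3) : Matrix (Fin N → Fin 2) (Fin N → Fin 2) ℂ :=
  (2 : ℂ)⁻¹ • ∑ i : Fin N, embedAt (pauli3 a) i

/-- The Tóth inequalities for the second moments `(v x, v y, v z)` of the collective
spin of an unpolarized `N`-qubit state. -/
def TothIneqs (N : ℕ) (v : Fin 3 → ℝ) : Prop :=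
  (v 0 + v 1 + v 2 ≤ (N : ℝ) * (N + 2) / 4) ∧
  ((N : ℝ) / 2 ≤ v 0 + v 1 + v 2) ∧
  (∀ π : Equiv.Perm (Fin 3), v (π 0) + v (π 1) - ((N : ℝ) - 1) * v (π 2) ≤ (N : ℝ) / 2) ∧
  (∀ π : Equiv.Perm (Fin 3),
    (N : ℝ) * ((N : ℝ) - 2) / 4 ≤ ((N : ℝ) - 1) * (v (π 0) + v (π 1)) - v (π 2))


/-- Tensor product of single-qubit matrices as an `N`-qubit matrix. -/
def tensorM {N : ℕ} (f : Fin N → Matrix (Fin 2) (Fin 2) ℂ) :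
    Matrix (Fin N → Fin 2) (Fin N → Fin 2) ℂ :=
  fun x y => ∏ i, f i (x i) (y i)

lemma tensorM_mul {N : ℕ} (f g : Fin N → Matrix (Fin 2) (Fin 2) ℂ) :
    tensorM f * tensorM g = tensorM (fun i => f i * g i) := by
  ext x y
  rw [Matrix.mul_apply]
  simp only [tensorM, Matrix.mul_apply]
  simp_rw [← Finset.prod_mul_distrib]
  rw [Finset.prod_univ_sum]
  simp [Fintype.piFinset_univ]

lemma tensorM_trace {N : ℕ} (f : Fin N → Matrix (Fin 2) (Fin 2) ℂ) :
    (tensorM f).trace = ∏ i, (f i).trace := by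
  simp only [Matrix.trace, Matrix.diag, tensorM]
  rw [Finset.prod_univ_sum]
  simp [Fintype.piFinset_univ]

lemma embedAt_eq {N : ℕ} (A : Matrix (Fin 2) (Fin 2) ℂ) (i : Fin N) :
    embedAt A i = tensorM (fun k => if k = i then A else 1) := by
  ext x y
  simp only [embedAt, tensorM]
  rw [← Finset.mul_prod_erase Finset.univ _ (Finset.mem_univ i)]
  simp only [if_pos rfl]
  congr 1
  refine Finset.prod_congr rfl fun j hj => ?_
  rw [if_neg (Finset.ne_of_mem_erase hj)]
  simp [Matrix.one_apply]

lemma trace_pauli (a : Fin 3) : (pauli3 a).trace = 0 := by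
  fin_cases a <;> simp [pauli3, Matrix.trace_fin_two]

lemma trace_pauli_sq (a : Fin 3) : (pauli3 a * pauli3 a).trace = 2 := by
  fin_cases a <;>
    norm_num [pauli3, Matrix.trace_fin_two, Matrix.mul_apply, Fin.sum_univ_two,
      Complex.I_mul_I]

lemma trace_Jspin (N : ℕ) (a : Fin 3) : (Jspin N a).trace = 0 := by
  unfold Jspin
  rw [Matrix.trace_smul, Matrix.trace_sum]
  have h : ∀ i : Fin N, (embedAt (pauli3 a) i).trace = 0 := by
    intro i
    rw [embedAt_eq, tensorM_trace]
    exact Finset.prod_eq_zero (Finset.mem_univ i) (by simp [trace_pauli])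
  simp [h]

lemma trace_Jsq (N : ℕ) (a : Fin 3) :
    (Jspin N a * Jspin N a).trace = (N : ℂ) * 2 ^ N / 4 := by
  unfold Jspin
  rw [Matrix.smul_mul, Matrix.mul_smul, smul_smul, Finset.sum_mul_sum,
    Matrix.trace_smul, Matrix.trace_sum]
  have key : ∀ i j : Fin N, (embedAt (pauli3 a) i * embedAt (pauli3 a) j).trace
      = if i = j then (2 : ℂ) ^ N else 0 := by
    intro i j
    rw [embedAt_eq, embedAt_eq, tensorM_mul, tensorM_trace]
    split_ifs with h
    · subst h
      have h2 : ∀ k : Fin N,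
          ((if k = i then pauli3 a else 1) * (if k = i then pauli3 a else 1)).trace
            = (2 : ℂ) := by
        intro k
        by_cases hk : k = i
        · simp [hk, trace_pauli_sq a]
        · simp [hk, Matrix.trace_one]
      rw [Finset.prod_congr rfl fun k _ => h2 k]
      simp
    · refine Finset.prod_eq_zero (Finset.mem_univ i) ?_
      simp [h, trace_pauli]
  simp_rw [Matrix.trace_sum, key]
  simp [Finset.sum_ite_eq, smul_eq_mul]
  ring

lemma trace_one_qubits (N : ℕ) :
    (1 : Matrix (Fin N → Fin 2) (Fin N → Fin 2) ℂ).trace = (2 : ℂ) ^ N := by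
  rw [Matrix.trace_one]
  simp [Fintype.card_fun]

lemma toth_combo (N : ℕ) (hN : 2 ≤ N) (u v : Fin 3 → ℝ) (t : ℝ)
    (ht0 : 0 ≤ t) (ht1 : t ≤ 1)
    (hv : ∀ a, v a = t * u a + (1 - t) * ((N : ℝ) / 4))
    (hu : TothIneqs N u) : TothIneqs N v := by
  obtain ⟨h1, h2, h3, h4⟩ := hu
  have hN' : (2 : ℝ) ≤ (N : ℝ) := by exact_mod_cast hN
  have h1t : (0 : ℝ) ≤ 1 - t := by linarith
  have hc1 : 3 * ((N : ℝ) / 4) ≤ (N : ℝ) * ((N : ℝ) + 2) / 4 := by nlinarith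
  have hc2 : (N : ℝ) / 2 ≤ 3 * ((N : ℝ) / 4) := by nlinarith
  have hc3 : 2 * ((N : ℝ) / 4) - ((N : ℝ) - 1) * ((N : ℝ) / 4) ≤ (N : ℝ) / 2 := by nlinarith
  have hc4 : (N : ℝ) * ((N : ℝ) - 2) / 4
      ≤ ((N : ℝ) - 1) * (2 * ((N : ℝ) / 4)) - (N : ℝ) / 4 := by nlinarith
  refine ⟨?_, ?_, fun π => ?_, fun π => ?_⟩
  · rw [hv 0, hv 1, hv 2]
    nlinarith [mul_le_mul_of_nonneg_left h1 ht0, mul_le_mul_of_nonneg_left hc1 h1t]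
  · rw [hv 0, hv 1, hv 2]
    nlinarith [mul_le_mul_of_nonneg_left h2 ht0, mul_le_mul_of_nonneg_left hc2 h1t]
  · rw [hv (π 0), hv (π 1), hv (π 2)]
    nlinarith [mul_le_mul_of_nonneg_left (h3 π) ht0, mul_le_mul_of_nonneg_left hc3 h1t]
  · rw [hv (π 0), hv (π 1), hv (π 2)]
    nlinarith [mul_le_mul_of_nonneg_left (h4 π) ht0, mul_le_mul_of_nonneg_left hc4 h1t]

/-- Compatibility with a global separable state via the inverse reduction map and
the Tóth inequalities. -/
theorem stmt18 (N : ℕ) (hN : 2 ≤ N)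
    (ρ : Matrix (Fin N → Fin 2) (Fin N → Fin 2) ℂ) (hρ : ρ.PosSemidef)
    (htr : ρ.trace = 1)
    (hJ : ∀ a : Fin 3, (ρ * Jspin N a).trace = 0)
    (αs : ℝ) (hαs : 1 < αs)
    (hToth : TothIneqs N (fun a =>
      αs * (((ρ * (Jspin N a * Jspin N a)).trace).re - (N : ℝ) / 4) + (N : ℝ) / 4))
    (β : ℝ) (hβ : (2 : ℝ) ^ N / (αs - 1) ≤ β) :
    ((β : ℂ)⁻¹ • ((((2 : ℝ) ^ N + β : ℝ) : ℂ) • ρ -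
        (1 : Matrix (Fin N → Fin 2) (Fin N → Fin 2) ℂ))).trace = 1 ∧
    (∀ a : Fin 3,
      (((β : ℂ)⁻¹ • ((((2 : ℝ) ^ N + β : ℝ) : ℂ) • ρ -
          (1 : Matrix (Fin N → Fin 2) (Fin N → Fin 2) ℂ))) * Jspin N a).trace = 0) ∧
    TothIneqs N (fun a =>
      ((((β : ℂ)⁻¹ • ((((2 : ℝ) ^ N + β : ℝ) : ℂ) • ρ -
          (1 : Matrix (Fin N → Fin 2) (Fin N → Fin 2) ℂ))) *
        (Jspin N a * Jspin N a)).trace).re) := by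
  have hαs1 : (0 : ℝ) < αs - 1 := by linarith
  have hP : (0 : ℝ) < (2 : ℝ) ^ N := by positivity
  have hβ0 : (0 : ℝ) < β := lt_of_lt_of_le (div_pos hP hαs1) hβ
  have hβc : (β : ℂ) ≠ 0 := Complex.ofReal_ne_zero.mpr hβ0.ne'
  have hαs0 : (0 : ℝ) < αs := by linarith
  have hkey : (2 : ℝ) ^ N ≤ β * (αs - 1) := by
    rw [div_le_iff₀ hαs1] at hβ; linarith
  refine ⟨?_, ?_, ?_⟩
  · rw [Matrix.trace_smul, Matrix.trace_sub, Matrix.trace_smul, htr, trace_one_qubits]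
    simp only [smul_eq_mul, mul_one]
    push_cast
    field_simp
    ring
  · intro a
    rw [Matrix.smul_mul, Matrix.sub_mul, Matrix.smul_mul, Matrix.one_mul,
      Matrix.trace_smul, Matrix.trace_sub, Matrix.trace_smul, hJ a, trace_Jspin]
    simp
  · have ht0 : (0 : ℝ) ≤ ((2 : ℝ) ^ N + β) / (β * αs) := by positivity
    have ht1 : ((2 : ℝ) ^ N + β) / (β * αs) ≤ 1 := by
      rw [div_le_one (by positivity)]
      nlinarith
    have hv : ∀ a : Fin 3,
        ((((β : ℂ)⁻¹ • ((((2 : ℝ) ^ N + β : ℝ) : ℂ) • ρ -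
            (1 : Matrix (Fin N → Fin 2) (Fin N → Fin 2) ℂ))) *
          (Jspin N a * Jspin N a)).trace).re
        = ((2 : ℝ) ^ N + β) / (β * αs) *
            (αs * ((((ρ * (Jspin N a * Jspin N a)).trace).re - (N : ℝ) / 4) : ℝ)
              + (N : ℝ) / 4)
          + (1 - ((2 : ℝ) ^ N + β) / (β * αs)) * ((N : ℝ) / 4) := by
      intro a
      rw [Matrix.smul_mul, Matrix.sub_mul, Matrix.smul_mul, Matrix.one_mul,
        Matrix.trace_smul, Matrix.trace_sub, Matrix.trace_smul, trace_Jsq]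
      have hK : ((N : ℂ) * 2 ^ N / 4) = (((N * 2 ^ N / 4 : ℝ)) : ℂ) := by
        push_cast; ring
      rw [hK, ← Complex.ofReal_inv]
      simp only [smul_eq_mul, Complex.mul_re, Complex.sub_re, Complex.ofReal_re,
        Complex.ofReal_im, Complex.sub_im, Complex.mul_im, Complex.ofReal_mul]
      push_cast
      field_simp
      ring
    exact toth_combo N hN _ _ _ ht0 ht1 hv hToth
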